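/- Let f : ℝⁿ → ℝ be continuously differentiable with Lipschitz continuous gradient, let T > 0 and x₀ ∈ ℝⁿ, and let x* : [0,T] → ℝⁿ be the solution of the gradient flow ẋ*(t) = −∇f(x*(t)), x*(0) = x₀. Then for every continuously differentiable path x : [0,T] → ℝⁿ with x(0) = x₀ one has J(x) ≥ J(x*) = f(x₀), where J(x) = ∫₀ᵀ ( (1/2)‖∇f(x(t))‖² + (1/2)‖ẋ(t)‖² ) dt + f(x(T)). In particular, the gradient flow is the optimal evolution for the calculus of variations problem of minimizing J over C¹ paths starting at x₀ with control u = ẋ. -/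

import Mathlib

open MeasureTheory Real intervalIntegral

/-- The action functional `J(x, x') = ∫₀ᵀ ((1/2)‖∇f(x t)‖² + (1/2)‖x' t‖²) dt + f (x T)`
of the gradient-descent optimal control problem, with control `u = x'`. -/
noncomputable def gdAction {n : ℕ} (f : EuclideanSpace ℝ (Fin n) → ℝ) (T : ℝ)
    (x x' : ℝ → EuclideanSpace ℝ (Fin n)) : ℝ :=
  (∫ t in (0 : ℝ)..T, ((1 / 2) * ‖gradient f (x t)‖ ^ 2 + (1 / 2) * ‖x' t‖ ^ 2)) + f (x T)

/-- Completing the square: the action equals `f (y 0)` plus the integral of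
`(1/2)‖∇f(y t) + y' t‖²`. -/
lemma gdAction_key {n : ℕ} (f : EuclideanSpace ℝ (Fin n) → ℝ) (hf : ContDiff ℝ 1 f)
    (hg : Continuous (gradient f)) (T : ℝ) (hT : 0 ≤ T)
    (y y' : ℝ → EuclideanSpace ℝ (Fin n))
    (hy : ∀ t ∈ Set.Icc (0 : ℝ) T, HasDerivAt y (y' t) t)
    (hy' : ContinuousOn y' (Set.Icc (0 : ℝ) T)) :
    gdAction f T y y' =
      (∫ t in (0:ℝ)..T, (1 / 2) * ‖gradient f (y t) + y' t‖ ^ 2) + f (y 0) := by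
  have huIcc : Set.uIcc (0:ℝ) T = Set.Icc 0 T := Set.uIcc_of_le hT
  have hyc : ContinuousOn y (Set.Icc (0:ℝ) T) :=
    fun t ht => (hy t ht).continuousAt.continuousWithinAt
  have hgc : ContinuousOn (fun t => gradient f (y t)) (Set.Icc (0:ℝ) T) :=
    hg.comp_continuousOn hyc
  -- chain rule
  have hchain : ∀ t ∈ Set.uIcc (0:ℝ) T,
      HasDerivAt (fun s => f (y s)) (inner ℝ (gradient f (y t)) (y' t) : ℝ) t := by
    intro t ht
    rw [huIcc] at ht
    have hgrad : HasGradientAt f (gradient f (y t)) (y t) :=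
      ((hf.differentiable one_ne_zero) (y t)).hasGradientAt
    have := hgrad.hasFDerivAt.comp_hasDerivAt t (hy t ht)
    exact this
  have hinnerc : ContinuousOn (fun t => (inner ℝ (gradient f (y t)) (y' t) : ℝ))
      (Set.Icc (0:ℝ) T) := hgc.inner hy'
  have hinnerInt : IntervalIntegrable (fun t => (inner ℝ (gradient f (y t)) (y' t) : ℝ))
      volume 0 T := (huIcc ▸ hinnerc).intervalIntegrable
  have hFTC : (∫ t in (0:ℝ)..T, (inner ℝ (gradient f (y t)) (y' t) : ℝ))
      = f (y T) - f (y 0) :=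
    intervalIntegral.integral_eq_sub_of_hasDerivAt hchain hinnerInt
  have hInt1 : IntervalIntegrable
      (fun t => (1/2) * ‖gradient f (y t)‖ ^ 2 + (1/2) * ‖y' t‖ ^ 2) volume 0 T := by
    apply ContinuousOn.intervalIntegrable
    rw [huIcc]
    exact ((hgc.norm.pow 2).const_smul (1/2:ℝ)).add ((hy'.norm.pow 2).const_smul (1/2:ℝ))
  have hsplit : (∫ t in (0:ℝ)..T, (1 / 2) * ‖gradient f (y t) + y' t‖ ^ 2)
      = (∫ t in (0:ℝ)..T, ((1/2) * ‖gradient f (y t)‖ ^ 2 + (1/2) * ‖y' t‖ ^ 2))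
        + (∫ t in (0:ℝ)..T, (inner ℝ (gradient f (y t)) (y' t) : ℝ)) := by
    rw [← intervalIntegral.integral_add hInt1 hinnerInt]
    apply intervalIntegral.integral_congr
    intro t _
    have := norm_add_sq_real (gradient f (y t)) (y' t)
    simp only []
    linarith [this]
  rw [gdAction, hsplit, hFTC]
  ring

/-- Let `f` be `C¹` with Lipschitz gradient, `T > 0`, `x₀ ∈ ℝⁿ`, and let
`x⋆` solve the gradient flow `ẋ⋆ = -∇f(x⋆)`, `x⋆ 0 = x₀`. Then for every `C¹` path `x`
with `x 0 = x₀` one has `J(x) ≥ J(x⋆)` and `J(x⋆) = f x₀`: the gradient flow is the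
optimal evolution of the calculus of variations problem. -/
theorem gradient_flow_optimal {n : ℕ}
    (f : EuclideanSpace ℝ (Fin n) → ℝ) (hf : ContDiff ℝ 1 f)
    (L : NNReal) (hLip : LipschitzWith L (gradient f))
    (T : ℝ) (hT : 0 < T) (x₀ : EuclideanSpace ℝ (Fin n))
    (xs : ℝ → EuclideanSpace ℝ (Fin n))
    (hxs : ∀ t ∈ Set.Icc (0 : ℝ) T, HasDerivAt xs (-(gradient f (xs t))) t)
    (hxs0 : xs 0 = x₀)
    (x x' : ℝ → EuclideanSpace ℝ (Fin n))
    (hx : ∀ t ∈ Set.Icc (0 : ℝ) T, HasDerivAt x (x' t) t)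
    (hx' : ContinuousOn x' (Set.Icc (0 : ℝ) T))
    (hx0 : x 0 = x₀) :
    gdAction f T x x' ≥ gdAction f T xs (fun t => -(gradient f (xs t)))
      ∧ gdAction f T xs (fun t => -(gradient f (xs t))) = f x₀ := by
  have hg : Continuous (gradient f) := hLip.continuous
  have hxsc : ContinuousOn xs (Set.Icc (0:ℝ) T) :=
    fun t ht => (hxs t ht).continuousAt.continuousWithinAt
  have hxs' : ContinuousOn (fun t => -(gradient f (xs t))) (Set.Icc (0:ℝ) T) :=
    (hg.comp_continuousOn hxsc).neg
  have hJxs : gdAction f T xs (fun t => -(gradient f (xs t))) = f x₀ := by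
    rw [gdAction_key f hf hg T hT.le xs _ hxs hxs']
    have : (∫ t in (0:ℝ)..T, (1 / 2) * ‖gradient f (xs t) + -(gradient f (xs t))‖ ^ 2)
        = 0 := by simp
    rw [this, hxs0, zero_add]
  have hJx : gdAction f T x x' =
      (∫ t in (0:ℝ)..T, (1 / 2) * ‖gradient f (x t) + x' t‖ ^ 2) + f x₀ := by
    rw [gdAction_key f hf hg T hT.le x x' hx hx', hx0]
  refine ⟨?_, hJxs⟩
  rw [hJxs, hJx]
  have hnn : (0:ℝ) ≤ ∫ t in (0:ℝ)..T, (1 / 2) * ‖gradient f (x t) + x' t‖ ^ 2 :=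
    intervalIntegral.integral_nonneg hT.le (fun t _ => by positivity)
  linarith
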